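/- Let f : ℝ → ℝ be continuously differentiable with a constant β > 0 such that f(β) ≤ 0 ≤ f(-β), let M : ℝ → ℝ be continuously differentiable and nonnegative, set f̃(u) = M(u) f(u), and choose κ ≥ max_{|ξ| ≤ β} |f̃'(ξ)|. Define N(ξ) = κ ξ + f̃(ξ). Then |N(ξ)| ≤ κ β for all ξ ∈ [-β, β]. -/

import Mathlib

/-- With f, M continuously differentiable, M ≥ 0, f(β) ≤ 0 ≤ f(-β),
f̃ = M·f, and κ ≥ max_{|ξ|≤β} |f̃'(ξ)|, the function N(ξ) = κξ + f̃(ξ) satisfies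
|N(ξ)| ≤ κβ on [-β, β]. -/
theorem stmt_0 (f M : ℝ → ℝ) (β κ : ℝ) (hβ : 0 < β)
    (hf : ContDiff ℝ 1 f) (hM : ContDiff ℝ 1 M) (hMnn : ∀ x, 0 ≤ M x)
    (hfβ : f β ≤ 0) (hfmβ : 0 ≤ f (-β))
    (hκ : ∀ ξ ∈ Set.Icc (-β) β, |deriv (fun u => M u * f u) ξ| ≤ κ) :
    ∀ ξ ∈ Set.Icc (-β) β, |κ * ξ + M ξ * f ξ| ≤ κ * β := by
  have hft : ContDiff ℝ 1 (fun u => M u * f u) := hM.mul hf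
  have hdiff : Differentiable ℝ (fun u => M u * f u) :=
    hft.differentiable one_ne_zero
  have hN : ContDiff ℝ 1 (fun u => κ * u + M u * f u) :=
    (contDiff_const.mul contDiff_id).add hft
  have hNdiff : Differentiable ℝ (fun u => κ * u + M u * f u) :=
    hN.differentiable one_ne_zero
  have hderiv : ∀ ξ, deriv (fun u => κ * u + M u * f u) ξ =
      κ + deriv (fun u => M u * f u) ξ := by
    intro ξ
    rw [deriv_fun_add ((differentiable_id.const_mul κ : Differentiable ℝ (fun u : ℝ => κ * u)) ξ) (hdiff ξ), deriv_const_mul _ differentiable_id.differentiableAt]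
    simp
  have hmono : MonotoneOn (fun u => κ * u + M u * f u) (Set.Icc (-β) β) := by
    apply monotoneOn_of_deriv_nonneg (convex_Icc _ _) hNdiff.continuous.continuousOn
      hNdiff.differentiableOn
    intro x hx
    rw [interior_Icc] at hx
    rw [hderiv]
    have := hκ x (Set.mem_Icc.mpr ⟨le_of_lt hx.1, le_of_lt hx.2⟩)
    linarith [abs_le.mp this |>.1]
  intro ξ hξ
  have hmem : (-β) ∈ Set.Icc (-β) β := Set.mem_Icc.mpr ⟨le_rfl, by linarith⟩
  have hmem' : β ∈ Set.Icc (-β) β := Set.mem_Icc.mpr ⟨by linarith, le_rfl⟩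
  have h1 := hmono hmem hξ hξ.1
  have h2 := hmono hξ hmem' hξ.2
  simp only at h1 h2
  have hb : M β * f β ≤ 0 := mul_nonpos_of_nonneg_of_nonpos (hMnn β) hfβ
  have hmb : 0 ≤ M (-β) * f (-β) := mul_nonneg (hMnn (-β)) hfmβ
  rw [abs_le]
  constructor <;> nlinarith
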